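/- Let G be a group satisfying hypotheses (H1) and (H2), and let V be an infinite virtually cyclic subgroup of G. Then V_max = ⋃ { N_G(C) : C an infinite cyclic subgroup of V that is normal in V } is a subgroup of G; it is an infinite virtually cyclic subgroup of G containing V, and there exists an infinite cyclic subgroup C₀ of V, normal in V, with V_max = N_G(C₀). -/

import Mathlib

/-- A subgroup is infinite cyclic if it is infinite and generated by a single element. -/
def IsInfiniteCyclicSubgroup {G : Type*} [Group G] (C : Subgroup G) : Prop :=
  (∃ g : G, C = Subgroup.zpowers g) ∧ (C : Set G).Infinite

/-- A subgroup is infinite virtually cyclic if it is infinite and contains a cyclic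
subgroup of finite index. -/
def IsInfiniteVirtuallyCyclicSubgroup {G : Type*} [Group G] (V : Subgroup G) : Prop :=
  (V : Set G).Infinite ∧ ∃ C : Subgroup V, C.FiniteIndex ∧ IsCyclic C

/-- `C` is an infinite cyclic subgroup of `V` which is normal in `V`. -/
def IsInfCyclicNormalIn {G : Type*} [Group G] (C V : Subgroup G) : Prop :=
  IsInfiniteCyclicSubgroup C ∧ C ≤ V ∧ ∀ v ∈ V, ∀ c ∈ C, v * c * v⁻¹ ∈ C

/-- `V_max = ⋃ { N_G(C) : C infinite cyclic subgroup of V normal in V }`. -/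
def VmaxSet {G : Type*} [Group G] (V : Subgroup G) : Set G :=
  ⋃ C ∈ {C : Subgroup G | IsInfCyclicNormalIn C V}, (Subgroup.normalizer (C : Set G) : Set G)

/-- (H1): every infinite cyclic subgroup has finite index in its centralizer. -/
def HypH1 (G : Type*) [Group G] : Prop :=
  ∀ C : Subgroup G, IsInfiniteCyclicSubgroup C →
    C.relIndex (Subgroup.centralizer (C : Set G)) ≠ 0

/-- (H2): there is an upper bound on the orders of finite subgroups. -/
def HypH2 (G : Type*) [Group G] : Prop :=
  ∃ b : ℕ, 0 < b ∧ ∀ H : Subgroup G, (H : Set G).Finite → Nat.card H ≤ b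

namespace VmaxAux
open Subgroup

variable {G : Type*} [Group G]

theorem conj_zpow' (g x : G) (n : ℤ) : (g * x * g⁻¹) ^ n = g * x ^ n * g⁻¹ := by
  have := map_zpow (MulAut.conj g) x n
  simpa [MulAut.conj_apply] using this

theorem rel_raise {g c : G} {p r : ℤ} (h : g * c ^ p * g⁻¹ = c ^ r) (t : ℤ) :
    g * c ^ (p * t) * g⁻¹ = c ^ (r * t) := by
  have := congrArg (fun y : G => y ^ t) h
  rw [conj_zpow', ← zpow_mul, ← zpow_mul] at this
  exact this


theorem rel_neg {g c : G} {p r : ℤ} (h : g * c ^ p * g⁻¹ = c ^ r) :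
    g * c ^ (-p) * g⁻¹ = c ^ (-r) := by
  have := congrArg (fun y : G => y⁻¹) h
  simp only [mul_inv_rev, inv_inv, ← zpow_neg] at this
  rw [← mul_assoc] at this
  exact this

theorem rel_inv {g c : G} {p r : ℤ} (h : g * c ^ p * g⁻¹ = c ^ r) :
    g⁻¹ * c ^ r * (g⁻¹)⁻¹ = c ^ p := by
  rw [inv_inv, ← h]; group

theorem rel_iter {g c : G} {p r : ℤ} (h : g * c ^ p * g⁻¹ = c ^ r) (j : ℕ) :
    g ^ j * c ^ (p ^ j) * (g ^ j)⁻¹ = c ^ (r ^ j) := by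
  induction j with
  | zero => simp
  | succ n ih =>
      have h1 : g * c ^ (p ^ (n + 1)) * g⁻¹ = c ^ (p ^ n * r) := by
        have := rel_raise h (p ^ n)
        rw [mul_comm r (p ^ n)] at this
        rw [pow_succ, mul_comm (p ^ n) p]
        exact this
      have h2 := rel_raise ih r
      calc g ^ (n + 1) * c ^ (p ^ (n + 1)) * (g ^ (n + 1))⁻¹
          = g ^ n * (g * c ^ (p ^ (n + 1)) * g⁻¹) * (g ^ n)⁻¹ := by
            rw [pow_succ, mul_inv_rev]; group
        _ = g ^ n * c ^ (p ^ n * r) * (g ^ n)⁻¹ := by rw [h1]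
        _ = c ^ (r ^ n * r) := h2
        _ = c ^ (r ^ (n + 1)) := by rw [pow_succ]

theorem zpow_ne_one_of_infinite_order {c : G} (hc : ¬IsOfFinOrder c) {n : ℤ} (hn : n ≠ 0) :
    c ^ n ≠ 1 := by
  intro h
  have hinj := injective_zpow_iff_not_isOfFinOrder.2 hc
  exact hn (by simpa using hinj (a₁ := n) (a₂ := 0) (by simpa using h))

theorem not_isOfFinOrder_zpow {c : G} (hc : ¬IsOfFinOrder c) {n : ℤ} (hn : n ≠ 0) :
    ¬IsOfFinOrder (c ^ n) := by
  intro h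
  rcases (isOfFinOrder_iff_pow_eq_one).1 h with ⟨k, hk, hk1⟩
  rw [← zpow_natCast, ← zpow_mul] at hk1
  exact zpow_ne_one_of_infinite_order hc (by positivity) hk1

theorem zpowers_infinite {c : G} (hc : ¬IsOfFinOrder c) :
    ((zpowers c : Subgroup G) : Set G).Infinite := by
  rw [← Set.infinite_coe_iff]
  have h0 : orderOf c = 0 := orderOf_eq_zero_iff.2 hc
  have := Nat.card_zpowers c
  rw [h0] at this
  rcases Nat.card_eq_zero.1 this with h | h
  · exact absurd (⟨1, one_mem _⟩ : Nonempty (zpowers c)) (by simpa using h)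
  · exact h


theorem infinite_order_of_zpowers_infinite {c : G}
    (hinf : ((zpowers c : Subgroup G) : Set G).Infinite) : ¬IsOfFinOrder c := by
  intro h
  rw [← Set.infinite_coe_iff] at hinf
  have := Nat.card_zpowers c
  have h0 : Nat.card (zpowers c) = 0 := Nat.card_eq_zero.2 (Or.inr hinf)
  rw [h0] at this
  exact orderOf_eq_zero_iff.1 this.symm h


/-- The "commensurator-like" subgroup attached to an infinite-order element `c`. -/
def Wgrp (c : G) : Subgroup G where
  carrier := {g | ∃ p r : ℤ, 0 < p ∧ r ≠ 0 ∧ g * c ^ p * g⁻¹ = c ^ r}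
  one_mem' := ⟨1, 1, one_pos, one_ne_zero, by simp⟩
  mul_mem' := by
    rintro a b ⟨p₁, r₁, hp₁, hr₁, h₁⟩ ⟨p₂, r₂, hp₂, hr₂, h₂⟩
    refine ⟨p₂ * p₁, r₁ * r₂, by positivity, mul_ne_zero hr₁ hr₂, ?_⟩
    have hb := rel_raise h₂ p₁
    have ha := rel_raise h₁ r₂
    calc a * b * c ^ (p₂ * p₁) * (a * b)⁻¹
        = a * (b * c ^ (p₂ * p₁) * b⁻¹) * a⁻¹ := by rw [mul_inv_rev]; group
      _ = a * c ^ (p₁ * r₂) * a⁻¹ := by rw [hb, mul_comm r₂ p₁]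
      _ = c ^ (r₁ * r₂) := ha
  inv_mem' := by
    rintro a ⟨p, r, hp, hr, h⟩
    have hi := rel_inv h
    rcases lt_or_gt_of_ne hr with hneg | hpos
    · exact ⟨-r, -p, by omega, by omega, rel_neg hi⟩
    · exact ⟨r, p, hpos, by omega, hi⟩

theorem mem_Wgrp {c g : G} {p r : ℤ} (hp : p ≠ 0) (hr : r ≠ 0)
    (h : g * c ^ p * g⁻¹ = c ^ r) : g ∈ Wgrp c := by
  rcases lt_or_gt_of_ne hp with hneg | hpos
  · exact ⟨-p, -r, by omega, by omega, rel_neg h⟩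
  · exact ⟨p, r, hpos, hr, h⟩


theorem mem_centralizer_zpowers_of_commute {g z : G} (h : Commute g z) :
    g ∈ centralizer ((zpowers z : Subgroup G) : Set G) := by
  rw [Subgroup.mem_centralizer_iff]
  rintro y ⟨k, rfl⟩
  exact ((h.zpow_right k).symm : _)

theorem finite_of_disjoint_of_index {H : Type*} [Group H] {K Z : Subgroup H}
    (hKZ : ∀ x, x ∈ K → x ∈ Z → x = 1) (hZ : Z.index ≠ 0) : Finite K := by
  have hQ : Finite (H ⧸ Z) := Nat.finite_of_card_ne_zero hZ
  have : Function.Injective (fun k : K => QuotientGroup.mk (s := Z) (k : H)) := by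
    intro k₁ k₂ hk
    have h1 : ((k₁ : H)⁻¹ * (k₂ : H)) ∈ Z := QuotientGroup.eq.1 hk
    have h2 : ((k₁⁻¹ * k₂ : K) : H) ∈ K := (k₁⁻¹ * k₂ : K).2
    have h3 : ((k₁⁻¹ * k₂ : K) : H) = (k₁ : H)⁻¹ * (k₂ : H) := rfl
    have h4 := hKZ _ h2 (h3 ▸ h1)
    have h5 : (k₁⁻¹ * k₂ : K) = (1 : K) := Subtype.ext h4
    rwa [inv_mul_eq_one] at h5
  exact Finite.of_injective _ this


/-- Key structural lemma: if `g` commutes with some positive power of the infinite-order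
element `c`, then it commutes with `c ^ (b! * b!)` where `b` bounds finite subgroups. -/
theorem key_commute {b : ℕ}
    (h2b : ∀ H : Subgroup G, ((H : Set G)).Finite → Nat.card H ≤ b)
    (h1 : ∀ C : Subgroup G,
      ((∃ g : G, C = Subgroup.zpowers g) ∧ (C : Set G).Infinite) →
      C.relIndex (Subgroup.centralizer (C : Set G)) ≠ 0)
    {c : G} (hc : ¬IsOfFinOrder c) {g : G} {m : ℕ} (hm : m ≠ 0)
    (hcomm : Commute g (c ^ m)) :
    Commute g (c ^ (Nat.factorial b * Nat.factorial b)) := by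
  classical
  set z := c ^ m with hz
  have hzord : ¬IsOfFinOrder z := by
    intro h
    rcases isOfFinOrder_iff_pow_eq_one.1 h with ⟨k, hk, hk1⟩
    exact hc (isOfFinOrder_iff_pow_eq_one.2 ⟨m * k, by positivity, by rwa [pow_mul]⟩)
  -- the centralizer of z has finite index over ⟨z⟩
  have hzinf : ((zpowers z : Subgroup G) : Set G).Infinite := by
    rw [← Set.infinite_coe_iff]
    have h0 : orderOf z = 0 := orderOf_eq_zero_iff.2 hzord
    have hcard := Nat.card_zpowers z
    rw [h0] at hcard
    rcases Nat.card_eq_zero.1 hcard with h | h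
    · exact absurd (⟨1, one_mem _⟩ : Nonempty (zpowers z)) (by simpa using h)
    · exact h
  set Hm := centralizer ((zpowers z : Subgroup G) : Set G) with hHm
  have hrel1 : (zpowers z).relIndex Hm ≠ 0 := h1 (zpowers z) ⟨⟨z, rfl⟩, hzinf⟩
  have hgH : g ∈ Hm := mem_centralizer_zpowers_of_commute hcomm
  have hcH : c ∈ Hm := mem_centralizer_zpowers_of_commute ((Commute.refl c).pow_right m)
  set P := closure ({g, c} : Set G) with hP
  have hgP : g ∈ P := subset_closure (by simp)
  have hcP : c ∈ P := subset_closure (by simp)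
  have hPH : P ≤ Hm := (closure_le _).2 (by rintro x (rfl | rfl) <;> assumption)
  have hzP : z ∈ P := pow_mem hcP m
  have hzPcent : (⟨z, hzP⟩ : P) ∈ center P := by
    rw [Subgroup.mem_center_iff]
    intro p
    have : (p : G) ∈ Hm := hPH p.2
    rw [Subgroup.mem_centralizer_iff] at this
    exact Subtype.ext ((this z (mem_zpowers z)).symm)
  -- finite index of the center of P
  have hzsub : zpowers (⟨z, hzP⟩ : P) = (zpowers z).subgroupOf P := by
    ext x
    simp only [mem_zpowers_iff, mem_subgroupOf]
    constructor
    · rintro ⟨k, rfl⟩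
      exact ⟨k, by simp⟩
    · rintro ⟨k, hk⟩
      exact ⟨k, Subtype.ext (by simpa using hk)⟩
  have hrelP : ((zpowers z).subgroupOf P).index ≠ 0 := by
    have hchain := relIndex_mul_relIndex (zpowers z) P Hm (by rwa [zpowers_le]) hPH
    intro h0
    rw [show (zpowers z).relIndex P = ((zpowers z).subgroupOf P).index from rfl] at hchain
    rw [h0, zero_mul] at hchain
    exact hrel1 hchain.symm
  haveI hficen : FiniteIndex (center P) := by
    refine ⟨fun h0 => ?_⟩
    have hle : zpowers (⟨z, hzP⟩ : P) ≤ center P := by rwa [zpowers_le]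
    have := index_dvd_of_le hle
    rw [h0] at this
    rw [hzsub] at this
    exact hrelP (zero_dvd_iff.1 this)
  set n := (center P).index with hn
  have hnne : n ≠ 0 := hficen.index_ne_zero
  set φ := MonoidHom.transferCenterPow P with hφ
  have hφapp : ∀ x : P, ((φ x : P) : G) = ((x ^ n : P) : G) := by
    intro x
    rw [hφ, MonoidHom.transferCenterPow_apply]
  -- kernel of φ is finite
  have hker_fin : Finite φ.ker := by
    apply finite_of_disjoint_of_index (Z := zpowers (⟨z, hzP⟩ : P))
    · intro x hx hxz
      rcases mem_zpowers_iff.1 hxz with ⟨k, hk⟩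
      have hx1 : (x : P) ^ n = 1 := by
        have := MonoidHom.mem_ker.1 hx
        have h2 := congrArg (fun w : center P => ((w : P) : G)) this
        rw [hφapp] at h2
        exact Subtype.ext (by simpa using h2)
      rw [← hk] at hx1
      rw [← zpow_natCast, ← zpow_mul] at hx1
      have : ((⟨z, hzP⟩ : P) : G) ^ (k * (n : ℤ)) = 1 := by
        have := congrArg (fun w : P => (w : G)) hx1
        simpa using this
      have hkn : k * (n : ℤ) = 0 := by
        by_contra hkn
        exact zpow_ne_one_of_infinite_order hzord hkn this
      have hk0 : k = 0 := by
        rcases mul_eq_zero.1 hkn with h | h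
        · exact h
        · exact absurd (by exact_mod_cast h) hnne
      rw [← hk, hk0, zpow_zero]
    · rw [hzsub]; exact hrelP
  -- the finite normal subgroup F of P, viewed in G
  set F := φ.ker.map P.subtype with hF
  have hFfin : ((F : Subgroup G) : Set G).Finite := by
    haveI := hker_fin
    have h1 : ((φ.ker : Subgroup P) : Set P).Finite := Set.toFinite _
    rw [hF, coe_map]
    exact h1.image _
  haveI hFfinite : Finite F := hFfin.to_subtype
  haveI hFnonempty : Nonempty F := ⟨1, one_mem _⟩
  have hFcard : Nat.card F ≤ b := h2b F hFfin
  have hFconj : ∀ p ∈ P, ∀ f ∈ F, p * f * p⁻¹ ∈ F := by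
    intro p hp f hf
    rcases Subgroup.mem_map.1 hf with ⟨f', hf', rfl⟩
    exact ⟨⟨p, hp⟩ * f' * ⟨p, hp⟩⁻¹, (MonoidHom.normal_ker φ).conj_mem f' hf' ⟨p, hp⟩, rfl⟩
  have hFcommutator : ∀ x ∈ P, ∀ y ∈ P, x * y * x⁻¹ * y⁻¹ ∈ F := by
    intro x hx y hy
    refine Subgroup.mem_map.2 ⟨⟨x, hx⟩ * ⟨y, hy⟩ * ⟨x, hx⟩⁻¹ * ⟨y, hy⟩⁻¹, ?_, rfl⟩
    rw [MonoidHom.mem_ker, map_mul, map_mul, map_mul, map_inv, map_inv]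
    have hcm : φ ⟨x, hx⟩ * φ ⟨y, hy⟩ = φ ⟨y, hy⟩ * φ ⟨x, hx⟩ := by
      apply Subtype.ext
      exact (Subgroup.mem_center_iff.1 (φ ⟨x, hx⟩).2 ((φ ⟨y, hy⟩ : center P) : P)).symm
    rw [hcm]
    group
  -- conjugation by c permutes F
  have hcmem : ∀ f : F, c * (f : G) * c⁻¹ ∈ F := fun f => hFconj c hcP f f.2
  have hcmem' : ∀ f : F, c⁻¹ * (f : G) * c ∈ F := fun f => by
    have := hFconj c⁻¹ (inv_mem hcP) f f.2
    simpa using this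
  set σ : Equiv.Perm F :=
    { toFun := fun f => ⟨c * f * c⁻¹, hcmem f⟩
      invFun := fun f => ⟨c⁻¹ * f * c, hcmem' f⟩
      left_inv := by intro f; apply Subtype.ext; simp [mul_assoc]
      right_inv := by intro f; apply Subtype.ext; simp [mul_assoc] } with hσ
  have hσpow : ∀ (k : ℕ) (f : F), (((σ ^ k) f : F) : G) = c ^ k * f * (c ^ k)⁻¹ := by
    intro k
    induction k with
    | zero => intro f; simp
    | succ t ih =>
        intro f
        have h1 : σ ^ (t + 1) = σ ^ t * σ := pow_succ σ t
        have h2 : ((σ ^ (t + 1)) f) = (σ ^ t) (σ f) := by rw [h1]; rfl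
        rw [h2, ih (σ f)]
        have h3 : ((σ f : F) : G) = c * f * c⁻¹ := rfl
        rw [h3, pow_succ]
        group
  have hperm1 : σ ^ Nat.card (Equiv.Perm F) = 1 := pow_card_eq_one'
  have hcardperm : Nat.card (Equiv.Perm F) = (Nat.card F).factorial := by
    haveI := Fintype.ofFinite F
    rw [Nat.card_eq_fintype_card, Nat.card_eq_fintype_card, Fintype.card_perm]
  have hdvd1 : Nat.card (Equiv.Perm F) ∣ b.factorial := by
    rw [hcardperm]; exact Nat.factorial_dvd_factorial hFcard
  set s := b.factorial with hs
  have hcent : ∀ f ∈ F, c ^ s * f * (c ^ s)⁻¹ = f := by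
    intro f hf
    obtain ⟨t, ht⟩ := hdvd1
    have hσs : σ ^ s = 1 := by rw [ht, pow_mul, hperm1, one_pow]
    have := congrArg (fun e : Equiv.Perm F => ((e ⟨f, hf⟩ : F) : G)) hσs
    simp only [Equiv.Perm.one_apply] at this
    rw [hσpow] at this
    simpa using this
  set w := g * c ^ s * g⁻¹ * (c ^ s)⁻¹ with hw
  have hwF : w ∈ F := hFcommutator g hgP (c ^ s) (pow_mem hcP s)
  have hcentpow : ∀ (k : ℕ), ∀ f ∈ F, (c ^ s) ^ k * f * ((c ^ s) ^ k)⁻¹ = f := by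
    intro k
    induction k with
    | zero => intro f hf; simp
    | succ t ih =>
        intro f hf
        have h1 := hcent f hf
        calc (c ^ s) ^ (t + 1) * f * ((c ^ s) ^ (t + 1))⁻¹
            = (c ^ s) ^ t * (c ^ s * f * (c ^ s)⁻¹) * ((c ^ s) ^ t)⁻¹ := by
              rw [pow_succ]; group
          _ = (c ^ s) ^ t * f * ((c ^ s) ^ t)⁻¹ := by rw [h1]
          _ = f := ih f hf
  have hIND : ∀ k : ℕ, g * (c ^ s) ^ k * g⁻¹ = w ^ k * (c ^ s) ^ k := by
    intro k
    induction k with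
    | zero => simp
    | succ t ih =>
        have e1 : g * (c ^ s) ^ (t + 1) * g⁻¹
            = (g * (c ^ s) ^ t * g⁻¹) * (g * c ^ s * g⁻¹) := by
          rw [pow_succ]; group
        have e2 : g * c ^ s * g⁻¹ = w * c ^ s := by rw [hw]; group
        rw [e1, ih, e2]
        have e3 : (c ^ s) ^ t * w * ((c ^ s) ^ t)⁻¹ = w := hcentpow t w hwF
        calc w ^ t * (c ^ s) ^ t * (w * c ^ s)
            = w ^ t * ((c ^ s) ^ t * w * ((c ^ s) ^ t)⁻¹) * ((c ^ s) ^ t * c ^ s) := by group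
          _ = w ^ t * w * ((c ^ s) ^ t * c ^ s) := by rw [e3]
          _ = w ^ (t + 1) * (c ^ s) ^ (t + 1) := by simp only [pow_succ, mul_assoc]
  set r := Nat.card F with hr
  have hrpos : 0 < r := Nat.card_pos
  have hwr : w ^ r = 1 := by
    have h1 : (⟨w, hwF⟩ : F) ^ r = 1 := pow_card_eq_one'
    have h2 := congrArg (fun x : F => (x : G)) h1
    simpa using h2
  have hcomm2 : Commute g ((c ^ s) ^ r) := by
    have h1 := hIND r
    rw [hwr, one_mul] at h1
    show g * (c ^ s) ^ r = (c ^ s) ^ r * g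
    calc g * (c ^ s) ^ r = (g * (c ^ s) ^ r * g⁻¹) * g := by group
      _ = (c ^ s) ^ r * g := by rw [h1]
  have hdvd2 : s * r ∣ b.factorial * b.factorial :=
    mul_dvd_mul dvd_rfl (Nat.dvd_factorial hrpos hFcard)
  obtain ⟨t2, ht2⟩ := hdvd2
  rw [ht2, pow_mul, pow_mul]
  exact (hcomm2.pow_right t2)

theorem zpow_natAbs_mem_zpowers_zpow (c : G) (K : ℤ) :
    c ^ ((K.natAbs : ℤ)) ∈ zpowers (c ^ K) := by
  rcases Int.natAbs_eq K with h | h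
  · rw [← h]; exact mem_zpowers _
  · rw [show ((K.natAbs : ℤ)) = -K by omega]
    rw [zpow_neg]
    exact inv_mem (mem_zpowers _)

theorem relindex_zpowers_pow_le (c : G) {K : ℤ} (hK : K ≠ 0) :
    (zpowers (c ^ K)).relIndex (zpowers c) ≠ 0 ∧
      (zpowers (c ^ K)).relIndex (zpowers c) ≤ K.natAbs := by
  set Z := (zpowers (c ^ K)).subgroupOf (zpowers c) with hZ
  set Q := (↥(zpowers c)) ⧸ Z with hQ
  have hpos : 0 < K.natAbs := Int.natAbs_pos.2 hK
  set n : ℤ := (K.natAbs : ℤ) with hn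
  obtain ⟨f, hfs⟩ : ∃ f : Fin K.natAbs → Q, Function.Surjective f := by
    refine ⟨fun i => QuotientGroup.mk
      (⟨c ^ ((i : ℕ) : ℤ), zpow_mem (mem_zpowers c) _⟩ : ↥(zpowers c)), ?_⟩
    intro q
    induction q using QuotientGroup.induction_on with
    | H x =>
      obtain ⟨t, ht⟩ := mem_zpowers_iff.1 x.2
      have hn0 : 0 < n := by omega
      have hmod1 : 0 ≤ t % n := Int.emod_nonneg t (by omega)
      have hmod2 : t % n < n := Int.emod_lt_of_pos t hn0
      refine ⟨⟨(t % n).toNat, by omega⟩, ?_⟩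
      rw [QuotientGroup.eq, mem_subgroupOf]
      have hcoe : (((⟨c ^ ((((t % n).toNat : ℕ)) : ℤ),
            zpow_mem (mem_zpowers c) _⟩ : ↥(zpowers c))⁻¹ * x : ↥(zpowers c)) : G)
          = c ^ (t - t % n) := by
        have h9 : (((t % n).toNat : ℕ) : ℤ) = t % n := by omega
        show (c ^ ((((t % n).toNat : ℕ)) : ℤ))⁻¹ * (x : G) = c ^ (t - t % n)
        rw [h9, ← ht, ← zpow_neg, ← zpow_add]
        ring_nf
      rw [hcoe]
      have h8 : t - t % n = n * (t / n) := by
        have := Int.emod_add_mul_ediv t n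
        omega
      rw [h8, zpow_mul]
      exact zpow_mem (zpow_natAbs_mem_zpowers_zpow c K) _
  haveI : Finite Q := Finite.of_surjective f hfs
  constructor
  · show Nat.card Q ≠ 0
    exact Nat.card_ne_zero.2 ⟨⟨QuotientGroup.mk 1⟩, inferInstance⟩
  · show Nat.card Q ≤ K.natAbs
    have := Nat.card_le_card_of_surjective f hfs
    simpa using this

theorem le_relindex_zpowers_pow {x : G} (hx : ¬IsOfFinOrder x) {P : ℤ} (hP : P ≠ 0) :
    P.natAbs ≤ (zpowers (x ^ P)).relIndex (zpowers x) := by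
  set Z := (zpowers (x ^ P)).subgroupOf (zpowers x) with hZ
  set Q := (↥(zpowers x)) ⧸ Z with hQ
  haveI : Finite Q := Nat.finite_of_card_ne_zero (relindex_zpowers_pow_le x hP).1
  have hinj : Function.Injective (fun i : Fin P.natAbs =>
      QuotientGroup.mk (s := Z) (⟨x ^ ((i : ℕ) : ℤ), zpow_mem (mem_zpowers x) _⟩ : ↥(zpowers x))) := by
    intro i j hij
    simp only at hij
    rw [QuotientGroup.eq, mem_subgroupOf] at hij
    have hcoe : (((⟨x ^ (((i : ℕ)) : ℤ), zpow_mem (mem_zpowers x) _⟩ : ↥(zpowers x))⁻¹ *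
        ⟨x ^ (((j : ℕ)) : ℤ), zpow_mem (mem_zpowers x) _⟩ : ↥(zpowers x)) : G)
        = x ^ (((j : ℕ) : ℤ) - ((i : ℕ) : ℤ)) := by
      show (x ^ (((i : ℕ)) : ℤ))⁻¹ * x ^ (((j : ℕ)) : ℤ) = _
      rw [← zpow_neg, ← zpow_add]
      ring_nf
    rw [hcoe] at hij
    obtain ⟨u, hu⟩ := mem_zpowers_iff.1 hij
    rw [← zpow_mul] at hu
    have heq : P * u = ((j : ℕ) : ℤ) - ((i : ℕ) : ℤ) :=
      injective_zpow_iff_not_isOfFinOrder.2 hx hu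
    have hi := i.2
    have hj := j.2
    have h1 : P.natAbs * u.natAbs = ((((j : ℕ)) : ℤ) - (((i : ℕ)) : ℤ)).natAbs := by
      rw [← Int.natAbs_mul, heq]
    have h2 : ((((j : ℕ)) : ℤ) - (((i : ℕ)) : ℤ)).natAbs < P.natAbs := by omega
    have h3 : u.natAbs = 0 := by
      by_contra h4
      have h5 : 1 ≤ u.natAbs := by omega
      have h6 : P.natAbs * 1 ≤ P.natAbs * u.natAbs := Nat.mul_le_mul_left _ h5
      omega
    have h7 : u = 0 := by omega
    rw [h7, mul_zero] at heq
    apply Fin.ext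
    omega
  have := Nat.card_le_card_of_injective _ hinj
  exact (by simpa using this : P.natAbs ≤ Nat.card Q)

theorem exists_pow_mem_of_relindex_ne_zero {H K : Subgroup G} (hrel : H.relIndex K ≠ 0)
    {y : G} (hy : y ∈ K) : ∃ t : ℕ, 0 < t ∧ y ^ t ∈ H := by
  haveI : Finite (↥K ⧸ H.subgroupOf K) := Nat.finite_of_card_ne_zero hrel
  obtain ⟨i, j, hne, heq⟩ := Finite.exists_ne_map_eq_of_infinite
    (fun t : ℕ => QuotientGroup.mk (s := H.subgroupOf K) ((⟨y, hy⟩ : K) ^ t))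
  have key : ∀ i j : ℕ, i < j →
      QuotientGroup.mk (s := H.subgroupOf K) ((⟨y, hy⟩ : K) ^ i) =
        QuotientGroup.mk (s := H.subgroupOf K) ((⟨y, hy⟩ : K) ^ j) → y ^ (j - i) ∈ H := by
    intro i j hij h
    have h1 := QuotientGroup.eq.1 h
    rw [mem_subgroupOf] at h1
    have h2 : ((((⟨y, hy⟩ : K) ^ i)⁻¹ * (⟨y, hy⟩ : K) ^ j : K) : G) = y ^ (j - i) := by
      have h3 : (⟨y, hy⟩ : K) ^ j = (⟨y, hy⟩ : K) ^ i * (⟨y, hy⟩ : K) ^ (j - i) := by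
        rw [← pow_add]
        congr 1
        omega
      rw [h3]
      push_cast
      group
    rwa [h2] at h1
  rcases Nat.lt_or_ge i j with hij | hij
  · exact ⟨j - i, by omega, key i j hij heq⟩
  · have hij' : j < i := by omega
    exact ⟨i - j, by omega, key j i hij' heq.symm⟩

theorem exists_zpow_generator {c : G} {X : Subgroup G} (hX : X ≤ zpowers c) :
    ∃ d : ℤ, X = zpowers (c ^ d) := by
  set S : AddSubgroup ℤ :=
    { carrier := {t : ℤ | c ^ t ∈ X}
      zero_mem' := by simp [Set.mem_setOf_eq, one_mem]
      add_mem' := by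
        intro a b ha hb
        simp only [Set.mem_setOf_eq] at *
        rw [zpow_add]
        exact mul_mem ha hb
      neg_mem' := by
        intro a ha
        simp only [Set.mem_setOf_eq] at *
        rw [zpow_neg]
        exact inv_mem ha } with hS
  obtain ⟨d, hd⟩ := Int.subgroup_cyclic S
  refine ⟨d, le_antisymm ?_ ?_⟩
  · intro x hx
    obtain ⟨t, ht⟩ := mem_zpowers_iff.1 (hX hx)
    have htS : t ∈ S := by
      show c ^ t ∈ X
      rwa [ht]
    rw [hd] at htS
    obtain ⟨u, hu⟩ := AddSubgroup.mem_closure_singleton.1 htS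
    rw [mem_zpowers_iff]
    refine ⟨u, ?_⟩
    rw [← zpow_mul, show d * u = u * d by ring, ← smul_eq_mul, hu, ht]
  · have hdS : d ∈ S := by
      rw [hd]
      exact AddSubgroup.subset_closure rfl
    rw [zpowers_le]
    exact hdS

theorem infinite_of_relindex_ne_zero {H K : Subgroup G} (hHK : H ≤ K)
    (hrel : H.relIndex K ≠ 0) (hK : (K : Set G).Infinite) : (H : Set G).Infinite := by
  rw [← Set.infinite_coe_iff] at *
  haveI : Infinite K := hK
  have hcard : Nat.card K = 0 := @Nat.card_eq_zero_of_infinite K _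
  have hmul := Subgroup.card_mul_index (H.subgroupOf K)
  rw [show (H.subgroupOf K).index = H.relIndex K from rfl] at hmul
  rw [hcard] at hmul
  have h0 : Nat.card (H.subgroupOf K) = 0 := by
    rcases Nat.mul_eq_zero.1 hmul with h | h
    · exact h
    · exact absurd h hrel
  haveI : Infinite (H.subgroupOf K) := by
    rcases Nat.card_eq_zero.1 h0 with h | h
    · exact absurd (⟨1, one_mem _⟩ : Nonempty (H.subgroupOf K)) (by simpa using h)
    · exact h
  have e := Subgroup.subgroupOfEquivOfLe hHK
  exact Infinite.of_injective _ e.injective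

theorem nat_bernoulli (ρ : ℕ) (hρ : 1 ≤ ρ) : ∀ j : ℕ, ρ ^ j + j * ρ ^ (j - 1) ≤ (ρ + 1) ^ j := by
  intro j
  induction j with
  | zero => simp
  | succ t ih =>
      rcases Nat.eq_zero_or_pos t with rfl | ht
      · simp
      · have h3 : ρ ^ (t - 1) * ρ = ρ ^ t := by
          rw [← pow_succ]
          congr 1
          omega
        have hexp : (ρ ^ t + t * ρ ^ (t - 1)) * (ρ + 1)
            = ρ ^ (t + 1) + ρ ^ t + t * ρ ^ t + t * ρ ^ (t - 1) := by
          calc (ρ ^ t + t * ρ ^ (t - 1)) * (ρ + 1)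
              = ρ ^ t * ρ + ρ ^ t + t * (ρ ^ (t - 1) * ρ) + t * ρ ^ (t - 1) := by ring
            _ = ρ ^ (t + 1) + ρ ^ t + t * ρ ^ t + t * ρ ^ (t - 1) := by
                rw [← pow_succ, h3]
        have h2 : (ρ ^ t + t * ρ ^ (t - 1)) * (ρ + 1) ≤ (ρ + 1) ^ t * (ρ + 1) :=
          Nat.mul_le_mul_right _ ih
        rw [hexp] at h2
        rw [← pow_succ] at h2
        have hgoal : ρ ^ (t + 1) + (t + 1) * ρ ^ (t + 1 - 1)
            ≤ ρ ^ (t + 1) + ρ ^ t + t * ρ ^ t + t * ρ ^ (t - 1) := by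
          have : (t + 1) * ρ ^ (t + 1 - 1) = t * ρ ^ t + ρ ^ t := by
            rw [show t + 1 - 1 = t by omega]
            ring
          rw [this]
          omega
        omega

/-- Main finiteness theorem: `⟨c⟩` has finite index in `Wgrp c`. -/
theorem main_relindex {b : ℕ}
    (h2b : ∀ H : Subgroup G, ((H : Set G)).Finite → Nat.card H ≤ b)
    (h1 : ∀ C : Subgroup G,
      ((∃ g : G, C = Subgroup.zpowers g) ∧ (C : Set G).Infinite) →
      C.relIndex (Subgroup.centralizer (C : Set G)) ≠ 0)
    {c : G} (hc : ¬IsOfFinOrder c) :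
    (zpowers c).relIndex (Wgrp c) ≠ 0 := by
  classical
  set L : ℕ := b.factorial * b.factorial with hL
  have hLpos : 0 < L := Nat.mul_pos b.factorial_pos b.factorial_pos
  set Hstar := centralizer ((zpowers (c ^ L) : Subgroup G) : Set G) with hHstar
  -- anything commuting with a nonzero power of c lies in Hstar
  have hKL : ∀ (x : G) (K : ℤ), K ≠ 0 → Commute x (c ^ K) → x ∈ Hstar := by
    intro x K hK hcom
    have hnat : Commute x (c ^ (K.natAbs)) := by
      have hcast : c ^ (K.natAbs) = c ^ ((K.natAbs : ℤ)) := (zpow_natCast _ _).symm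
      rw [hcast]
      rcases Int.natAbs_eq K with h | h
      · rw [← h]
        exact hcom
      · rw [show ((K.natAbs : ℤ)) = -K by omega, zpow_neg]
        exact hcom.inv_right
    have h2 := key_commute h2b h1 hc (Int.natAbs_ne_zero.2 hK) hnat
    exact mem_centralizer_zpowers_of_commute h2
  have hcLc : c ^ L ∈ zpowers c := ⟨(L : ℤ), by simp⟩
  have hcHstar : c ∈ Hstar :=
    mem_centralizer_zpowers_of_commute ((Commute.refl c).pow_right L)
  have hCHstar : zpowers c ≤ Hstar := zpowers_le.2 hcHstar
  have hHW : Hstar ≤ Wgrp c := by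
    intro x hx
    rw [Subgroup.mem_centralizer_iff] at hx
    have h3 := hx (c ^ L) (mem_zpowers _)
    have h4 : x * c ^ ((L : ℤ)) * x⁻¹ = c ^ ((L : ℤ)) := by
      rw [zpow_natCast]
      rw [← h3]
      group
    exact mem_Wgrp (by exact_mod_cast hLpos.ne') (by exact_mod_cast hLpos.ne') h4
  have hrelCH : (zpowers c).relIndex Hstar ≠ 0 := by
    have hLord : ¬IsOfFinOrder (c ^ L) := by
      have := not_isOfFinOrder_zpow hc (n := (L : ℤ)) (by exact_mod_cast hLpos.ne')
      rwa [zpow_natCast] at this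
    have happ := h1 (zpowers (c ^ L)) ⟨⟨c ^ L, rfl⟩, zpowers_infinite hLord⟩
    have hchain := relIndex_mul_relIndex (zpowers (c ^ L)) (zpowers c) Hstar
      (zpowers_le.2 hcLc) hCHstar
    intro h0
    rw [h0, mul_zero] at hchain
    exact happ hchain.symm
  set nstar := (zpowers c).relIndex Hstar with hnstar
  -- no contracting conjugation relations
  have hcontra : ∀ (h : G) (p r : ℤ), r ≠ 0 → r.natAbs < p.natAbs →
      h * c ^ p * h⁻¹ = c ^ r → False := by
    intro h p r hr hlt hrel
    set ρ := r.natAbs with hρdef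
    have hρ : 1 ≤ ρ := Int.natAbs_pos.2 hr
    set j := nstar * ρ + 1 with hj
    set x := h ^ j * c * (h ^ j)⁻¹ with hx
    have hxp : x ^ (p ^ j) = c ^ (r ^ j) := by
      rw [hx, conj_zpow']
      exact rel_iter hrel j
    have hrj : (r : ℤ) ^ j ≠ 0 := pow_ne_zero _ hr
    have hxord : ¬IsOfFinOrder x := by
      intro hf
      rcases isOfFinOrder_iff_pow_eq_one.1 hf with ⟨k, hk, hk1⟩
      have h5 : x ^ ((k : ℤ)) = 1 := by rw [zpow_natCast]; exact hk1
      rw [hx, conj_zpow'] at h5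
      have h6 : c ^ ((k : ℤ)) = 1 := by
        have := congrArg (fun y : G => (h ^ j)⁻¹ * y * h ^ j) h5
        simpa [mul_assoc] using this
      exact zpow_ne_one_of_infinite_order hc (by exact_mod_cast hk.ne') h6
    have hxH : x ∈ Hstar := by
      apply hKL x (r ^ j) hrj
      have h7 : Commute x (x ^ (p ^ j)) := (Commute.refl x).zpow_right _
      rwa [hxp] at h7
    have hXle : zpowers x ≤ Hstar := zpowers_le.2 hxH
    have hAX : zpowers (c ^ (r ^ j)) ≤ zpowers x := by
      rw [← hxp]
      exact zpowers_le.2 (zpow_mem (mem_zpowers x) _)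
    have hAC : zpowers (c ^ (r ^ j)) ≤ zpowers c := zpowers_le.2 (zpow_mem (mem_zpowers c) _)
    have hlower : (p ^ j).natAbs ≤ (zpowers (c ^ (r ^ j))).relIndex (zpowers x) := by
      rw [← hxp]
      exact le_relindex_zpowers_pow hxord (by
        intro h0
        rw [h0, zpow_zero] at hxp
        exact zpow_ne_one_of_infinite_order hc hrj hxp.symm)
    have hmulrel := relIndex_mul_relIndex (zpowers (c ^ (r ^ j))) (zpowers x) Hstar hAX hXle
    have hmulrel2 := relIndex_mul_relIndex (zpowers (c ^ (r ^ j))) (zpowers c) Hstar hAC hCHstar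
    have hACbound := relindex_zpowers_pow_le c hrj
    have hfinA : (zpowers (c ^ (r ^ j))).relIndex Hstar ≠ 0 := by
      rw [← hmulrel2]
      exact mul_ne_zero hACbound.1 hrelCH
    have hdvd : (zpowers (c ^ (r ^ j))).relIndex (zpowers x) ∣
        (zpowers (c ^ (r ^ j))).relIndex Hstar := Dvd.intro _ hmulrel
    have hub : (zpowers (c ^ (r ^ j))).relIndex Hstar ≤ ρ ^ j * nstar := by
      rw [← hmulrel2]
      apply Nat.mul_le_mul _ le_rfl
      calc (zpowers (c ^ (r ^ j))).relIndex (zpowers c) ≤ (r ^ j).natAbs := hACbound.2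
        _ = ρ ^ j := by rw [Int.natAbs_pow]
    have hfinal : (p ^ j).natAbs ≤ ρ ^ j * nstar :=
      le_trans (le_trans hlower (Nat.le_of_dvd (Nat.pos_of_ne_zero hfinA) hdvd)) hub
    -- arithmetic contradiction
    have hpabs : ρ + 1 ≤ p.natAbs := by omega
    have hb1 := nat_bernoulli ρ hρ j
    have hb2 : (ρ + 1) ^ j ≤ p.natAbs ^ j := Nat.pow_le_pow_left hpabs j
    have hb3 : (p ^ j).natAbs = p.natAbs ^ j := by rw [Int.natAbs_pow]
    have hone : 1 ≤ ρ ^ (j - 1) := Nat.one_le_pow _ _ (by omega)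
    have hjj : ρ * ρ ^ (j - 1) = ρ ^ j := by
      rw [← pow_succ']
      congr 1
    have hee : j * ρ ^ (j - 1) = nstar * ρ ^ j + ρ ^ (j - 1) := by
      calc j * ρ ^ (j - 1) = nstar * (ρ * ρ ^ (j - 1)) + ρ ^ (j - 1) := by rw [hj]; ring
        _ = nstar * ρ ^ j + ρ ^ (j - 1) := by rw [hjj]
    rw [hee] at hb1
    have hcmm : ρ ^ j * nstar = nstar * ρ ^ j := Nat.mul_comm _ _
    omega
  -- every element of W acts on powers of c by ±1
  have hsgn : ∀ u : G, u ∈ Wgrp c → ∃ p : ℤ, 0 < p ∧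
      (u * c ^ p * u⁻¹ = c ^ p ∨ u * c ^ p * u⁻¹ = c ^ (-p)) := by
    intro u hu
    obtain ⟨p, r, hp, hr, hrel⟩ := hu
    rcases Nat.lt_trichotomy r.natAbs p.natAbs with hlt | heq | hgt
    · exact absurd hrel (fun hh => hcontra u p r hr hlt hh)
    · refine ⟨p, hp, ?_⟩
      have : r = p ∨ r = -p := by
        rcases Int.natAbs_eq r with h | h <;> rcases Int.natAbs_eq p with h2 | h2 <;> omega
      rcases this with rfl | rfl
      · exact Or.inl hrel
      · exact Or.inr hrel
    · exfalso
      have hi := rel_inv hrel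
      rcases lt_or_gt_of_ne hr with hrneg | hrpos
      · have := rel_neg hi
        exact hcontra u⁻¹ (-r) (-p) (by omega) (by simpa using hgt) this
      · exact hcontra u⁻¹ r p hp.ne' (by omega) hi
  -- Hstar has index at most 2 in W
  have hidx2 : Hstar.relIndex (Wgrp c) ≠ 0 := by
    have hpos_mem : ∀ u : G, (∃ p : ℤ, 0 < p ∧ u * c ^ p * u⁻¹ = c ^ p) → u ∈ Hstar := by
      rintro u ⟨p, hp, hrel⟩
      apply hKL u p hp.ne'
      show u * c ^ p = c ^ p * u
      calc u * c ^ p = (u * c ^ p * u⁻¹) * u := by group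
        _ = c ^ p * u := by rw [hrel]
    by_cases hexn : ∃ w₀ : G, w₀ ∈ Wgrp c ∧ ∃ p₀ : ℤ, 0 < p₀ ∧ w₀ * c ^ p₀ * w₀⁻¹ = c ^ (-p₀)
    · obtain ⟨w₀, hw₀W, p₀, hp₀, hw₀⟩ := hexn
      have hclaim : ∀ q : (Wgrp c) ⧸ (Hstar.subgroupOf (Wgrp c)),
          q = QuotientGroup.mk 1 ∨ q = QuotientGroup.mk ⟨w₀, hw₀W⟩ := by
        intro q
        induction q using QuotientGroup.induction_on with
        | H u =>
          obtain ⟨p, hp, hca⟩ := hsgn (u : G) u.2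
          rcases hca with hpos | hneg
          · left
            rw [QuotientGroup.eq, mem_subgroupOf]
            have : (u : G) ∈ Hstar := hpos_mem u ⟨p, hp, hpos⟩
            simpa using this
          · right
            rw [QuotientGroup.eq, mem_subgroupOf]
            apply hpos_mem
            refine ⟨p₀ * p, by positivity, ?_⟩
            have e1 : w₀ * c ^ (p₀ * p) * w₀⁻¹ = c ^ (-(p₀ * p)) := by
              have h9 := rel_raise hw₀ p
              rwa [show -p₀ * p = -(p₀ * p) by ring] at h9
            have e2 : (u : G)⁻¹ * c ^ (-(p₀ * p)) * (u : G) = c ^ (p₀ * p) := by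
              have h9 := rel_raise (rel_inv hneg) p₀
              rw [show -p * p₀ = -(p₀ * p) by ring, show p * p₀ = p₀ * p by ring] at h9
              simpa using h9
            show ((u⁻¹ * ⟨w₀, hw₀W⟩ : Wgrp c) : G) * c ^ (p₀ * p) *
                ((u⁻¹ * ⟨w₀, hw₀W⟩ : Wgrp c) : G)⁻¹ = c ^ (p₀ * p)
            have hcoe : ((u⁻¹ * ⟨w₀, hw₀W⟩ : Wgrp c) : G) = (u : G)⁻¹ * w₀ := rfl
            rw [hcoe]
            calc (u : G)⁻¹ * w₀ * c ^ (p₀ * p) * ((u : G)⁻¹ * w₀)⁻¹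
                = (u : G)⁻¹ * (w₀ * c ^ (p₀ * p) * w₀⁻¹) * (u : G) := by group
              _ = (u : G)⁻¹ * c ^ (-(p₀ * p)) * (u : G) := by rw [e1]
              _ = c ^ (p₀ * p) := e2
      have hfinq : Finite ((Wgrp c) ⧸ (Hstar.subgroupOf (Wgrp c))) := by
        apply Finite.of_surjective
          (fun t : Bool => if t then (QuotientGroup.mk ⟨w₀, hw₀W⟩ :
            (Wgrp c) ⧸ (Hstar.subgroupOf (Wgrp c))) else QuotientGroup.mk 1)
        intro q
        rcases hclaim q with h | h
        · exact ⟨false, h.symm⟩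
        · exact ⟨true, h.symm⟩
      show (Hstar.subgroupOf (Wgrp c)).index ≠ 0
      have : Nonempty ((Wgrp c) ⧸ (Hstar.subgroupOf (Wgrp c))) := ⟨QuotientGroup.mk 1⟩
      exact Nat.card_ne_zero.2 ⟨this, hfinq⟩
    · have hall : Hstar.subgroupOf (Wgrp c) = ⊤ := by
        rw [Subgroup.eq_top_iff']
        intro u
        rw [mem_subgroupOf]
        obtain ⟨p, hp, hca⟩ := hsgn (u : G) u.2
        rcases hca with hpos | hneg
        · exact hpos_mem u ⟨p, hp, hpos⟩
        · exact absurd ⟨(u : G), u.2, p, hp, hneg⟩ hexn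
      show (Hstar.subgroupOf (Wgrp c)).index ≠ 0
      rw [hall, Subgroup.index_top]
      omega
  -- conclude
  have hfinal := relIndex_mul_relIndex (zpowers c) Hstar (Wgrp c) hCHstar hHW
  intro h0
  rw [← hfinal] at h0
  rcases Nat.mul_eq_zero.1 h0 with h | h
  · exact hrelCH h
  · exact hidx2 h

theorem isCyclic_zpowers (g : G) : IsCyclic (zpowers g) := by
  refine ⟨⟨⟨g, mem_zpowers g⟩, ?_⟩⟩
  intro x
  obtain ⟨k, hk⟩ := mem_zpowers_iff.1 x.2
  exact mem_zpowers_iff.2 ⟨k, Subtype.ext (by simpa using hk)⟩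

end VmaxAux

open Subgroup VmaxAux in
/-- For a group satisfying (H1) and (H2) and an infinite virtually cyclic subgroup `V`,
the set `V_max` is a subgroup: it is an infinite virtually cyclic subgroup containing `V`,
and it equals `N_G(C₀)` for some infinite cyclic subgroup `C₀` of `V` normal in `V`. -/
theorem vmax_is_infinite_virtually_cyclic_subgroup
    {G : Type*} [Group G] (h1 : HypH1 G) (h2 : HypH2 G)
    (V : Subgroup G) (hV : IsInfiniteVirtuallyCyclicSubgroup V) :
    ∃ W : Subgroup G, (W : Set G) = VmaxSet V ∧
      IsInfiniteVirtuallyCyclicSubgroup W ∧ V ≤ W ∧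
      ∃ C₀ : Subgroup G, IsInfCyclicNormalIn C₀ V ∧ W = (Subgroup.normalizer (C₀ : Set G)) := by
  classical
  obtain ⟨b, hbpos, h2b⟩ := h2
  have h1' : ∀ C : Subgroup G,
      ((∃ g : G, C = Subgroup.zpowers g) ∧ (C : Set G).Infinite) →
      C.relIndex (Subgroup.centralizer (C : Set G)) ≠ 0 := h1
  obtain ⟨hVinf, Cv, hCvFI, hCvCyc⟩ := hV
  haveI := hCvFI
  set Ncore := Cv.normalCore with hNcoredef
  haveI hNFI : Ncore.FiniteIndex := inferInstance
  haveI hVinfty : Infinite V := hVinf.to_subtype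
  haveI hNinf : Infinite Ncore := by
    have hcV : Nat.card V = 0 := Nat.card_eq_zero_of_infinite
    have hmul := Subgroup.card_mul_index Ncore
    rw [hcV] at hmul
    have h0 : Nat.card Ncore = 0 := by
      rcases Nat.mul_eq_zero.1 hmul with h | h
      · exact h
      · exact absurd h hNFI.index_ne_zero
    rcases Nat.card_eq_zero.1 h0 with h | h
    · exact absurd (⟨1, one_mem _⟩ : Nonempty Ncore) (by simpa using h)
    · exact h
  haveI : IsCyclic Cv := hCvCyc
  haveI hNcyc : IsCyclic Ncore := by
    have e := Subgroup.subgroupOfEquivOfLe (Subgroup.normalCore_le Cv)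
    haveI : IsCyclic (Ncore.subgroupOf Cv) := Subgroup.isCyclic _
    exact isCyclic_of_surjective e e.surjective
  obtain ⟨γ, hγ⟩ := IsCyclic.exists_generator (α := Ncore)
  set c : G := ((γ : V) : G) with hcdef
  have hγord : orderOf γ = 0 := by
    have htop : zpowers γ = ⊤ := (Subgroup.eq_top_iff' (zpowers γ)).2 hγ
    have hcard := Nat.card_zpowers γ
    rw [htop, Subgroup.card_top] at hcard
    rw [← hcard]
    exact Nat.card_eq_zero_of_infinite
  have hc : ¬IsOfFinOrder c := by
    have h5 : orderOf ((γ : V) : G) = orderOf (γ : V) :=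
      orderOf_injective V.subtype V.subtype_injective _
    have h6 : orderOf (γ : V) = orderOf γ :=
      orderOf_injective Ncore.subtype Ncore.subtype_injective _
    rw [← orderOf_eq_zero_iff, hcdef, h5, h6]
    exact hγord
  set NG := Ncore.map V.subtype with hNGdef
  have hCeq : zpowers c = NG := by
    apply le_antisymm
    · rw [zpowers_le]
      exact Subgroup.mem_map.2 ⟨(γ : V), γ.2, rfl⟩
    · rintro x hx
      obtain ⟨y, hyN, rfl⟩ := Subgroup.mem_map.1 hx
      obtain ⟨k, hk⟩ := mem_zpowers_iff.1 (hγ ⟨y, hyN⟩)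
      rw [mem_zpowers_iff]
      refine ⟨k, ?_⟩
      have := congrArg (fun w : Ncore => ((w : V) : G)) hk
      simpa using this
  have hrelCV : (zpowers c).relIndex V ≠ 0 := by
    rw [hCeq]
    show (NG.subgroupOf V).index ≠ 0
    have : NG.subgroupOf V = Ncore :=
      Subgroup.comap_map_eq_self_of_injective V.subtype_injective _
    rw [this]
    exact hNFI.index_ne_zero
  have hCleV : zpowers c ≤ V := by rw [hCeq]; exact Subgroup.map_subtype_le _
  have hCnormV : ∀ v ∈ V, ∀ y ∈ zpowers c, v * y * v⁻¹ ∈ zpowers c := by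
    intro v hv y hy
    rw [hCeq] at hy ⊢
    obtain ⟨y', hy', rfl⟩ := Subgroup.mem_map.1 hy
    exact Subgroup.mem_map.2
      ⟨⟨v, hv⟩ * y' * ⟨v, hv⟩⁻¹, (Subgroup.normalCore_normal Cv).conj_mem y' hy' ⟨v, hv⟩, rfl⟩
  -- main machinery
  have hmain : (zpowers c).relIndex (Wgrp c) ≠ 0 := main_relindex h2b h1' hc
  have hCW : zpowers c ≤ Wgrp c := by
    rw [zpowers_le]
    exact mem_Wgrp one_ne_zero one_ne_zero (by simp)
  have hVW : V ≤ Wgrp c := by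
    intro v hv
    have h5 := hCnormV v hv c (mem_zpowers c)
    obtain ⟨l, hl⟩ := mem_zpowers_iff.1 h5
    have hl0 : l ≠ 0 := by
      intro h0
      rw [h0, zpow_zero] at hl
      have hc1 : c = 1 := by
        have := congrArg (fun y : G => v⁻¹ * y * v) hl.symm
        simpa [mul_assoc] using this
      exact hc (hc1 ▸ IsOfFinOrder.one)
    exact mem_Wgrp one_ne_zero hl0 (by rw [zpow_one]; exact hl.symm)
  -- the canonical normal infinite cyclic subgroup C₀
  set NC := ((zpowers c).subgroupOf (Wgrp c)).normalCore with hNCdef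
  haveI hsfi : ((zpowers c).subgroupOf (Wgrp c)).FiniteIndex := ⟨hmain⟩
  haveI hNCFI : NC.FiniteIndex := inferInstance
  set C₀ := NC.map (Wgrp c).subtype with hC₀def
  have hC₀subOf : C₀.subgroupOf (Wgrp c) = NC :=
    Subgroup.comap_map_eq_self_of_injective (Wgrp c).subtype_injective _
  have hC₀relW : C₀.relIndex (Wgrp c) ≠ 0 := by
    show (C₀.subgroupOf (Wgrp c)).index ≠ 0
    rw [hC₀subOf]
    exact hNCFI.index_ne_zero
  have hC₀leC : C₀ ≤ zpowers c := by
    rintro x ⟨y, hy, rfl⟩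
    exact Subgroup.mem_subgroupOf.1 (Subgroup.normalCore_le _ hy)
  have hC₀leW : C₀ ≤ Wgrp c := Subgroup.map_subtype_le _
  have hWnormC₀ : ∀ w ∈ Wgrp c, ∀ y ∈ C₀, w * y * w⁻¹ ∈ C₀ := by
    intro w hw y hy
    obtain ⟨y', hy', rfl⟩ := Subgroup.mem_map.1 hy
    exact Subgroup.mem_map.2
      ⟨⟨w, hw⟩ * y' * ⟨w, hw⟩⁻¹, (Subgroup.normalCore_normal _).conj_mem y' hy' ⟨w, hw⟩, rfl⟩
  have hWleNorm : Wgrp c ≤ (Subgroup.normalizer (C₀ : Set G)) := by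
    intro w hw
    rw [Subgroup.mem_normalizer_iff]
    intro y
    constructor
    · intro hy; exact hWnormC₀ w hw y hy
    · intro hy
      have h5 := hWnormC₀ w⁻¹ (inv_mem hw) _ hy
      have heq : w⁻¹ * (w * y * w⁻¹) * w⁻¹⁻¹ = y := by group
      rwa [heq] at h5
  have hWinf : ((Wgrp c : Subgroup G) : Set G).Infinite :=
    Set.Infinite.mono hCW (zpowers_infinite hc)
  have hC₀inf : (C₀ : Set G).Infinite := infinite_of_relindex_ne_zero hC₀leW hC₀relW hWinf
  obtain ⟨d, hdeq⟩ := exists_zpow_generator hC₀leC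
  have hd0 : d ≠ 0 := by
    intro h0
    rw [h0, zpow_zero, zpowers_one_eq_bot] at hdeq
    rw [hdeq] at hC₀inf
    exact hC₀inf (by simp)
  have hNormleW : (Subgroup.normalizer (C₀ : Set G)) ≤ Wgrp c := by
    intro g hg
    have hcd : c ^ d ∈ C₀ := by rw [hdeq]; exact mem_zpowers _
    have h5 : g * c ^ d * g⁻¹ ∈ C₀ := (Subgroup.mem_normalizer_iff.1 hg _).1 hcd
    rw [hdeq] at h5
    obtain ⟨e, he⟩ := mem_zpowers_iff.1 h5
    rw [← zpow_mul] at he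
    have hde : d * e ≠ 0 := by
      intro h0
      rw [h0, zpow_zero] at he
      have hc1 : c ^ d = 1 := by
        have h9 := congrArg (fun y : G => g⁻¹ * y * g) he
        simp only [mul_assoc] at h9
        have : (1 : G) = c ^ d := by simpa [mul_assoc] using h9
        exact this.symm
      exact zpow_ne_one_of_infinite_order hc hd0 hc1
    exact mem_Wgrp hd0 hde he.symm
  have hfam : IsInfCyclicNormalIn C₀ V :=
    ⟨⟨⟨c ^ d, hdeq⟩, hC₀inf⟩, hC₀leC.trans hCleV,
      fun v hv y hy => hWnormC₀ v (hVW hv) y hy⟩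
  refine ⟨(Subgroup.normalizer (C₀ : Set G)), ?_, ?_, hVW.trans hWleNorm, C₀, hfam, rfl⟩
  · -- carrier = VmaxSet
    apply le_antisymm
    · intro x hx
      exact Set.mem_biUnion (show C₀ ∈ {C : Subgroup G | IsInfCyclicNormalIn C V} from hfam) hx
    · intro x hx
      rw [VmaxSet, Set.mem_iUnion₂] at hx
      obtain ⟨D, hD, hxD⟩ := hx
      obtain ⟨⟨⟨δ, hδeq⟩, hDinf⟩, hDV, hDnorm⟩ := hD
      have hδord : ¬IsOfFinOrder δ :=
        infinite_order_of_zpowers_infinite (by rw [← hδeq]; exact hDinf)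
      have hrelCD : (zpowers c).relIndex D ≠ 0 := by
        intro h0
        exact hrelCV (Subgroup.relIndex_eq_zero_of_le_right hDV h0)
      have hδD : δ ∈ D := by rw [hδeq]; exact mem_zpowers δ
      obtain ⟨t, ht, hδt⟩ := VmaxAux.exists_pow_mem_of_relindex_ne_zero hrelCD hδD
      obtain ⟨k, hk⟩ := mem_zpowers_iff.1 hδt
      have hk0 : k ≠ 0 := by
        intro h0
        rw [h0, zpow_zero] at hk
        exact hδord (isOfFinOrder_iff_pow_eq_one.2 ⟨t, ht, hk.symm⟩)
      have hδtD : δ ^ t ∈ D := pow_mem hδD t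
      have hxd : x * δ ^ t * x⁻¹ ∈ D := (Subgroup.mem_normalizer_iff.1 hxD _).1 hδtD
      obtain ⟨t₂, ht₂, h2⟩ := VmaxAux.exists_pow_mem_of_relindex_ne_zero hrelCD hxd
      obtain ⟨l, hl⟩ := mem_zpowers_iff.1 h2
      have hrel : x * c ^ (k * (t₂ : ℤ)) * x⁻¹ = c ^ l := by
        calc x * c ^ (k * (t₂ : ℤ)) * x⁻¹ = x * (c ^ k) ^ ((t₂ : ℕ) : ℤ) * x⁻¹ := by
              rw [← zpow_mul]
          _ = x * (δ ^ t) ^ ((t₂ : ℕ) : ℤ) * x⁻¹ := by rw [hk]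
          _ = (x * δ ^ t * x⁻¹) ^ ((t₂ : ℕ) : ℤ) := (conj_zpow' _ _ _).symm
          _ = (x * δ ^ t * x⁻¹) ^ (t₂ : ℕ) := by rw [zpow_natCast]
          _ = c ^ l := hl.symm
      have hkt : k * (t₂ : ℤ) ≠ 0 := mul_ne_zero hk0 (by exact_mod_cast ht₂.ne')
      have hl0 : l ≠ 0 := by
        intro h0
        rw [h0, zpow_zero] at hrel
        have hc1 : c ^ (k * (t₂ : ℤ)) = 1 := by
          have := congrArg (fun y : G => x⁻¹ * y * x) hrel
          simpa [mul_assoc] using this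
        exact zpow_ne_one_of_infinite_order hc hkt hc1
      exact hWleNorm (mem_Wgrp hkt hl0 hrel)
  · -- IVC of the normalizer
    constructor
    · exact Set.Infinite.mono (Subgroup.le_normalizer (H := C₀)) hC₀inf
    · refine ⟨C₀.subgroupOf (Subgroup.normalizer (C₀ : Set G)), ⟨?_⟩, ?_⟩
      · show (C₀.subgroupOf (Subgroup.normalizer (C₀ : Set G))).index ≠ 0
        have hchain := Subgroup.relIndex_mul_relIndex C₀ (Subgroup.normalizer (C₀ : Set G)) (Wgrp c)
          Subgroup.le_normalizer hNormleW
        intro h0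
        rw [show C₀.relIndex (Subgroup.normalizer (C₀ : Set G)) = (C₀.subgroupOf (Subgroup.normalizer (C₀ : Set G))).index from rfl] at hchain
        rw [h0, zero_mul] at hchain
        exact hC₀relW hchain.symm
      · haveI : IsCyclic C₀ := hdeq ▸ VmaxAux.isCyclic_zpowers (c ^ d)
        have e := Subgroup.subgroupOfEquivOfLe (Subgroup.le_normalizer (H := C₀))
        exact isCyclic_of_surjective e.symm e.symm.surjective
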